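/- Let f_s(x) = 1{a·x > s} be a halfspace with a ∈ ℝ_{≥0}^n and a fixed coordinate i. For δ > 0 define e_i^δ = E_{s ~ U(0,δ)}[I_i(f_{t+s})]. Then e_i^δ ≥ (a_i/δ)·Pr[a·x ∈ [t+a_i, t+δ-a_i]]. -/

import Mathlib

open Finset

noncomputable section
open scoped Classical

/-- The ±1 value associated to a Boolean bit. -/
def sgn1 (b : Bool) : ℝ := if b then 1 else -1

/-- Probability of an event under the uniform measure on `{-1,1}^n`. -/
def cubePr (n : ℕ) (P : (Fin n → Bool) → Prop) : ℝ :=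
  ((univ.filter P).card : ℝ) / 2 ^ n

/-- Expectation of a function under the uniform measure on `{-1,1}^n`. -/
def cubeE (n : ℕ) (f : (Fin n → Bool) → ℝ) : ℝ := (∑ x, f x) / 2 ^ n

/-- The linear form `a · x = ∑ aᵢ xᵢ` on `{-1,1}^n`. -/
def lin (n : ℕ) (a : Fin n → ℝ) (x : Fin n → Bool) : ℝ := ∑ i, a i * sgn1 (x i)

/-- The halfspace `1{a · x > t}` as a 0/1-valued function. -/
def halfspace (n : ℕ) (a : Fin n → ℝ) (t : ℝ) (x : Fin n → Bool) : ℝ :=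
  if t < lin n a x then 1 else 0

/-- The influence of coordinate `i` on `f`: the probability that flipping
coordinate `i` changes the value of `f`. -/
def infl (n : ℕ) (i : Fin n) (f : (Fin n → Bool) → ℝ) : ℝ :=
  cubePr n (fun x => f x ≠ f (Function.update x i (!x i)))

/-- The degree-1 Fourier coefficient `f̂({i}) = E[f(x)·xᵢ]`. -/
def fCoeff (n : ℕ) (f : (Fin n → Bool) → ℝ) (i : Fin n) : ℝ :=
  cubeE n (fun x => f x * sgn1 (x i))

/-- The degree-1 Fourier weight `W¹(f) = ∑ᵢ f̂({i})²`. -/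
def W1 (n : ℕ) (f : (Fin n → Bool) → ℝ) : ℝ := ∑ i, (fCoeff n f i) ^ 2


lemma sgn1_not (b : Bool) : sgn1 (!b) = - sgn1 b := by cases b <;> simp [sgn1]

lemma lin_update (n : ℕ) (a : Fin n → ℝ) (x : Fin n → Bool) (i : Fin n) :
    lin n a (Function.update x i (!x i)) = lin n a x - 2 * (a i * sgn1 (x i)) := by
  have h : ∀ j : Fin n, a j * sgn1 (Function.update x i (!x i) j)
      = a j * sgn1 (x j) + (if j = i then -(2 * (a i * sgn1 (x i))) else 0) := by
    intro j
    by_cases hj : j = i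
    · subst hj
      simp [sgn1_not]
      ring
    · simp [Function.update_of_ne hj, hj]
  unfold lin
  rw [Finset.sum_congr rfl fun j _ => h j, Finset.sum_add_distrib,
    Finset.sum_ite_eq' Finset.univ i]
  simp
  ring

lemma xor_lt_iff (L L' u : ℝ) :
    ¬((u < L) ↔ (u < L')) ↔ min L L' ≤ u ∧ u < max L L' := by
  simp only [min_le_iff, lt_max_iff]
  simp only [← not_lt]
  tauto

lemma cubePr_eq_sum (n : ℕ) (P : (Fin n → Bool) → Prop) :
    cubePr n P = (∑ x, if P x then (1:ℝ) else 0) / 2 ^ n := by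
  unfold cubePr
  congr 1
  rw [Finset.card_filter]
  push_cast
  rfl

lemma final_combine (A δ S T P : ℝ) (hδ : 0 < δ) (hP : 0 < P) (hT : A * S ≤ T) :
    A / δ * (S / P) ≤ T / P / δ := by
  have h1 : A / δ * (S / P) = (A * S) / (δ * P) := by ring
  have h2 : T / P / δ = T / (δ * P) := by rw [div_div, mul_comm]
  rw [h1, h2]
  gcongr

def Gfun (n : ℕ) (a : Fin n → ℝ) (t : ℝ) (i : Fin n) (x : Fin n → Bool) : ℝ → ℝ :=
  Set.indicator
    (Set.Ico (min (lin n a x) (lin n a (Function.update x i (!x i))) - t)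
             (max (lin n a x) (lin n a (Function.update x i (!x i))) - t))
    (fun _ => 1)


/-- **Lower bound on the smoothed influence.** For a halfspace family
`f_s = 1{a·x > s}` with `a ≥ 0` and `δ > 0`, the averaged influence
`e_i^δ = E_{s~U(0,δ)}[Iᵢ(f_{t+s})]` satisfies
`e_i^δ ≥ (aᵢ/δ)·Pr[a·x ∈ [t+aᵢ, t+δ-aᵢ]]`. -/
theorem smoothed_influence_lower_bound (n : ℕ) (a : Fin n → ℝ) (t δ : ℝ) (i : Fin n)
    (ha : ∀ j, 0 ≤ a j) (hδ : 0 < δ) :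
    (a i / δ) * cubePr n (fun x => lin n a x ∈ Set.Icc (t + a i) (t + δ - a i)) ≤
      (∫ s in Set.Ioo (0 : ℝ) δ, infl n i (halfspace n a (t + s))) / δ := by
  have hGnn : ∀ x s, 0 ≤ Gfun n a t i x s := fun x s =>
    Set.indicator_nonneg (fun _ _ => zero_le_one) s
  have hGint : ∀ x, MeasureTheory.IntegrableOn (Gfun n a t i x) (Set.Ioo 0 δ) := fun x =>
    (MeasureTheory.integrableOn_const measure_Ioo_lt_top.ne).indicator
      measurableSet_Ico
  -- Step A : pointwise formula for infl
  have hinfl : ∀ s : ℝ, infl n i (halfspace n a (t + s)) = (∑ x, Gfun n a t i x s) / 2 ^ n := by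
    intro s
    rw [infl, cubePr_eq_sum]
    congr 1
    apply Finset.sum_congr rfl
    intro x _
    have hne : (halfspace n a (t+s) x ≠ halfspace n a (t+s) (Function.update x i (!x i)))
        ↔ ¬((t+s < lin n a x) ↔ (t+s < lin n a (Function.update x i (!x i)))) := by
      unfold halfspace
      by_cases h1 : t + s < lin n a x <;>
        by_cases h2 : t + s < lin n a (Function.update x i (!x i)) <;>
        simp [h1, h2]
    rw [xor_lt_iff] at hne
    have hmem : (halfspace n a (t+s) x ≠ halfspace n a (t+s) (Function.update x i (!x i)))
        ↔ s ∈ Set.Ico (min (lin n a x) (lin n a (Function.update x i (!x i))) - t)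
            (max (lin n a x) (lin n a (Function.update x i (!x i))) - t) := by
      rw [hne, Set.mem_Ico]
      constructor <;> rintro ⟨h1, h2⟩ <;> constructor <;> linarith
    simp only [Gfun]
    by_cases hP : halfspace n a (t+s) x ≠ halfspace n a (t+s) (Function.update x i (!x i))
    · rw [if_pos hP, Set.indicator_of_mem (hmem.mp hP)]
    · rw [if_neg hP, Set.indicator_of_notMem (fun hm => hP (hmem.mpr hm))]
  -- Step B : exchange integral and sum
  have hsum : (∫ s in Set.Ioo (0:ℝ) δ, infl n i (halfspace n a (t + s)))
      = (∑ x, ∫ s in Set.Ioo (0:ℝ) δ, Gfun n a t i x s) / 2 ^ n := by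
    simp only [hinfl]
    rw [MeasureTheory.integral_div, MeasureTheory.integral_finset_sum _ fun x _ => hGint x]
  -- Step C : per-point bound
  have hkey : ∀ x : Fin n → Bool,
      a i * (@ite ℝ (lin n a x ∈ Set.Icc (t + a i) (t + δ - a i))
        (Classical.propDecidable _) (1:ℝ) 0)
        ≤ ∫ s in Set.Ioo (0:ℝ) δ, Gfun n a t i x s := by
    intro x
    have hnn : 0 ≤ ∫ s in Set.Ioo (0:ℝ) δ, Gfun n a t i x s :=
      MeasureTheory.setIntegral_nonneg measurableSet_Ioo fun s _ => hGnn x s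
    by_cases hx : lin n a x ∈ Set.Icc (t + a i) (t + δ - a i)
    · rcases eq_or_lt_of_le (ha i) with hai | hai
      · rw [← hai]
        simpa using hnn
      · obtain ⟨hx1, hx2⟩ := hx
        have hJ : ∃ c : ℝ, 0 ≤ c ∧ c + a i ≤ δ ∧
            Set.Ioo c (c + a i) ⊆
              Set.Ico (min (lin n a x) (lin n a (Function.update x i (!x i))) - t)
                (max (lin n a x) (lin n a (Function.update x i (!x i))) - t) := by
          rcases Bool.eq_false_or_eq_true (x i) with hxi | hxi
          · have hL' : lin n a (Function.update x i (!x i)) = lin n a x - 2 * a i := by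
              rw [lin_update, hxi]
              have : sgn1 true = 1 := rfl
              rw [this]; ring
            refine ⟨lin n a x - t - a i, by linarith, by linarith, ?_⟩
            rw [hL', min_eq_right (by linarith), max_eq_left (by linarith)]
            intro s hs
            exact ⟨by linarith [hs.1], by linarith [hs.2]⟩
          · have hL' : lin n a (Function.update x i (!x i)) = lin n a x + 2 * a i := by
              rw [lin_update, hxi]
              have : sgn1 false = -1 := rfl
              rw [this]; ring
            refine ⟨lin n a x - t, by linarith, by linarith, ?_⟩
            rw [hL', min_eq_left (by linarith), max_eq_right (by linarith)]
            intro s hs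
            exact ⟨by linarith [hs.1], by linarith [hs.2]⟩
        obtain ⟨c, hc0, hcδ, hJIco⟩ := hJ
        have hJsub : Set.Ioo c (c + a i) ⊆ Set.Ioo (0:ℝ) δ :=
          fun s hs => ⟨lt_of_le_of_lt hc0 hs.1, lt_of_lt_of_le hs.2 hcδ⟩
        have hGone : ∀ s ∈ Set.Ioo c (c + a i), Gfun n a t i x s = 1 := fun s hs => by
          simp only [Gfun]
          exact Set.indicator_of_mem (hJIco hs) _
        have hint1 : (∫ s in Set.Ioo c (c + a i), Gfun n a t i x s) = a i := by
          rw [MeasureTheory.setIntegral_congr_fun measurableSet_Ioo hGone,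
            MeasureTheory.setIntegral_const]
          simp [Real.volume_Ioo, ENNReal.toReal_ofReal hai.le, hai.le]
        have hmono : (∫ s in Set.Ioo c (c + a i), Gfun n a t i x s)
            ≤ ∫ s in Set.Ioo (0:ℝ) δ, Gfun n a t i x s :=
          MeasureTheory.setIntegral_mono_set (hGint x)
            (MeasureTheory.ae_of_all _ (hGnn x)) (HasSubset.Subset.eventuallyLE hJsub)
        rw [if_pos (Set.mem_Icc.mpr ⟨hx1, hx2⟩), mul_one]
        linarith [hint1 ▸ hmono]
    · simp [hx, hnn]
  -- Step D : combine
  rw [hsum, cubePr_eq_sum]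
  refine final_combine _ _ _ _ _ hδ (by positivity) ?_
  rw [Finset.mul_sum]
  exact Finset.sum_le_sum fun x _ => hkey x


end
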